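/- Fix α > 0 and N ∈ ℕ, and let x, p : [0,∞) → ℝ^N be differentiable and solve the peakon ODE system, with p_j(t) ≥ 0 for all j, t and Σ_{j=1}^N p_j(t) = 1 for all t ≥ 0. Then for all s, t ≥ 0: |x_j(s) − x_j(t)| ≤ (1/(2α)) |s−t| for every j, and Σ_{j=1}^N |p_j(s) − p_j(t)| ≤ (1/(2α²)) |s−t|. -/

import Mathlib

open MeasureTheory Filter ZeroAtInfty

/-- The peakon ODE system for the Camassa–Holm equation (with `sgn 0 = 0`),
posed on the time interval `[0,∞)`. -/
def PeakonSystem (α : ℝ) (N : ℕ) (x p : ℝ → Fin N → ℝ) : Prop :=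
  ∀ j : Fin N, ∀ t : ℝ, 0 ≤ t →
    HasDerivWithinAt (fun τ => x τ j)
      ((1 / (2 * α)) * ∑ i, p t i * Real.exp (-|x t j - x t i| / α)) (Set.Ici 0) t ∧
    HasDerivWithinAt (fun τ => p τ j)
      ((1 / (2 * α ^ 2)) * p t j * ∑ i ∈ Finset.univ.erase j,
        p t i * Real.sign (x t j - x t i) * Real.exp (-|x t j - x t i| / α)) (Set.Ici 0) t

lemma lipIci {f f' : ℝ → ℝ} {C : ℝ}
    (hf : ∀ t ∈ Set.Ici (0:ℝ), HasDerivWithinAt f (f' t) (Set.Ici 0) t)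
    (hb : ∀ t ∈ Set.Ici (0:ℝ), |f' t| ≤ C) :
    ∀ s t : ℝ, 0 ≤ s → 0 ≤ t → |f s - f t| ≤ C * |s - t| := by
  intro s t hs ht
  have := (convex_Ici (0:ℝ)).norm_image_sub_le_of_norm_hasDerivWithin_le
    hf (fun τ hτ => by rw [Real.norm_eq_abs]; exact hb τ hτ) ht hs
  simpa [Real.norm_eq_abs] using this

lemma abs_sign_le_one (z : ℝ) : |Real.sign z| ≤ 1 := by
  rcases Real.sign_apply_eq z with h | h | h <;> rw [h] <;> norm_num

/-- for nonnegative peakon solutions of total momentum `1`, the positions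
are `1/(2α)`-Lipschitz in time and the momenta are summably `1/(2α²)`-Lipschitz in time. -/
theorem statement18 (α : ℝ) (hα : 0 < α) (N : ℕ) (x p : ℝ → Fin N → ℝ)
    (hode : PeakonSystem α N x p)
    (hpos : ∀ j : Fin N, ∀ t : ℝ, 0 ≤ t → 0 ≤ p t j)
    (hmom : ∀ t : ℝ, 0 ≤ t → ∑ j, p t j = 1) :
    ∀ s t : ℝ, 0 ≤ s → 0 ≤ t →
      (∀ j : Fin N, |x s j - x t j| ≤ (1 / (2 * α)) * |s - t|) ∧
      ∑ j, |p s j - p t j| ≤ (1 / (2 * α ^ 2)) * |s - t| := by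
  intro s t hs ht
  have hc1 : (0:ℝ) ≤ 1 / (2 * α) := by positivity
  have hc2 : (0:ℝ) ≤ 1 / (2 * α ^ 2) := by positivity
  -- the exponential factors are in [0,1]
  have hexp : ∀ j i : Fin N, ∀ τ : ℝ,
      Real.exp (-|x τ j - x τ i| / α) ≤ 1 := by
    intro j i τ
    rw [Real.exp_le_one_iff]
    apply div_nonpos_of_nonpos_of_nonneg (neg_nonpos.mpr (abs_nonneg _)) hα.le
  constructor
  · intro j
    refine lipIci (f' := fun τ =>
        (1 / (2 * α)) * ∑ i, p τ i * Real.exp (-|x τ j - x τ i| / α))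
      (fun τ hτ => (hode j τ hτ).1) ?_ s t hs ht
    intro τ hτ
    have hS0 : (0:ℝ) ≤ ∑ i, p τ i * Real.exp (-|x τ j - x τ i| / α) :=
      Finset.sum_nonneg fun i _ => mul_nonneg (hpos i τ hτ) (Real.exp_pos _).le
    have hS1 : ∑ i, p τ i * Real.exp (-|x τ j - x τ i| / α) ≤ 1 := by
      calc ∑ i, p τ i * Real.exp (-|x τ j - x τ i| / α)
          ≤ ∑ i, p τ i := Finset.sum_le_sum fun i _ =>
            mul_le_of_le_one_right (hpos i τ hτ) (hexp j i τ)
        _ = 1 := hmom τ hτ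
    rw [abs_mul, abs_of_nonneg hc1, abs_of_nonneg hS0]
    exact mul_le_of_le_one_right hc1 hS1
  · -- momenta: use signs to turn the sum of abs into a single derivative bound
    set ε : Fin N → ℝ := fun j => if p t j ≤ p s j then 1 else -1 with hε
    have hεabs : ∀ j, |ε j| = 1 := by
      intro j; simp only [hε]; split_ifs <;> norm_num
    -- the pointwise derivative bound on each |p_j'|
    set D : Fin N → ℝ → ℝ := fun j τ =>
      (1 / (2 * α ^ 2)) * p τ j * ∑ i ∈ Finset.univ.erase j,
        p τ i * Real.sign (x τ j - x τ i) * Real.exp (-|x τ j - x τ i| / α) with hD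
    have hDbound : ∀ j : Fin N, ∀ τ ∈ Set.Ici (0:ℝ),
        |D j τ| ≤ (1 / (2 * α ^ 2)) * p τ j := by
      intro j τ hτ
      have hT : |∑ i ∈ Finset.univ.erase j,
          p τ i * Real.sign (x τ j - x τ i) * Real.exp (-|x τ j - x τ i| / α)| ≤ 1 := by
        calc |∑ i ∈ Finset.univ.erase j,
              p τ i * Real.sign (x τ j - x τ i) * Real.exp (-|x τ j - x τ i| / α)|
            ≤ ∑ i ∈ Finset.univ.erase j,
              |p τ i * Real.sign (x τ j - x τ i) * Real.exp (-|x τ j - x τ i| / α)| :=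
              Finset.abs_sum_le_sum_abs _ _
          _ ≤ ∑ i ∈ Finset.univ.erase j, p τ i := by
              apply Finset.sum_le_sum
              intro i _
              rw [abs_mul, abs_mul, abs_of_nonneg (hpos i τ hτ),
                abs_of_nonneg (Real.exp_pos _).le]
              calc p τ i * |Real.sign (x τ j - x τ i)| * Real.exp (-|x τ j - x τ i| / α)
                  ≤ p τ i * 1 * 1 := by
                    apply mul_le_mul (mul_le_mul_of_nonneg_left
                      (abs_sign_le_one _) (hpos i τ hτ)) (hexp j i τ)
                      (Real.exp_pos _).le
                    exact mul_nonneg (hpos i τ hτ) zero_le_one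
                _ = p τ i := by ring
          _ ≤ ∑ i, p τ i := Finset.sum_le_sum_of_subset_of_nonneg
              (Finset.erase_subset _ _) (fun i _ _ => hpos i τ hτ)
          _ = 1 := hmom τ hτ
      rw [hD]
      simp only
      rw [abs_mul, abs_mul, abs_of_nonneg hc2, abs_of_nonneg (hpos j τ hτ)]
      exact mul_le_of_le_one_right (mul_nonneg hc2 (hpos j τ hτ)) hT
    -- g gathers the signed momenta
    have hg : ∀ τ ∈ Set.Ici (0:ℝ), HasDerivWithinAt (fun τ => ∑ j, ε j * p τ j)
        (∑ j, ε j * D j τ) (Set.Ici 0) τ := by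
      intro τ hτ
      exact HasDerivWithinAt.fun_sum fun j _ => ((hode j τ hτ).2).const_mul (ε j)
    have hgb : ∀ τ ∈ Set.Ici (0:ℝ), |∑ j, ε j * D j τ| ≤ 1 / (2 * α ^ 2) := by
      intro τ hτ
      calc |∑ j, ε j * D j τ| ≤ ∑ j, |ε j * D j τ| := Finset.abs_sum_le_sum_abs _ _
        _ ≤ ∑ j, (1 / (2 * α ^ 2)) * p τ j := by
            apply Finset.sum_le_sum
            intro j _
            rw [abs_mul, hεabs j, one_mul]
            exact hDbound j τ hτ
        _ = 1 / (2 * α ^ 2) := by rw [← Finset.mul_sum, hmom τ hτ, mul_one]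
    have hlip := lipIci hg hgb s t hs ht
    have heq : ∑ j, |p s j - p t j| = (∑ j, ε j * p s j) - (∑ j, ε j * p t j) := by
      rw [← Finset.sum_sub_distrib]
      apply Finset.sum_congr rfl
      intro j _
      rw [← mul_sub]
      simp only [hε]
      split_ifs with h
      · rw [one_mul, abs_of_nonneg (by linarith)]
      · rw [abs_of_neg (by linarith)]; ring
    rw [heq]
    exact le_trans (le_abs_self _) hlip
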